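/- Assume (H0) and d₁, d₂, l > 0. Then for every natural number k and every real ω, Ĉ_k(ω) < 0. -/
import Mathlib


open Real

/-- Δ = M² − 4·K·(a·m + c·p)·(a·r₂ + c·d − c·r₀) with M = a·m + c·p + K·(a·r₂ + c·d). -/
noncomputable def Delta (r₀ r₂ K d a p c m : ℝ) : ℝ :=
  (a*m + c*p + K*(a*r₂ + c*d))^2 - 4*K*(a*m + c*p)*(a*r₂ + c*d - c*r₀)

/-- The positive equilibrium predator density v⋆. -/
noncomputable def vstar (r₀ r₂ K d a p c m : ℝ) : ℝ :=
  (-(a*m + c*p + K*(a*r₂ + c*d)) + Real.sqrt (Delta r₀ r₂ K d a p c m)) / (2*K*(a*m + c*p))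

/-- The positive equilibrium prey density u⋆ = (r₂ + m·v⋆)/c. -/
noncomputable def ustar (r₀ r₂ K d a p c m : ℝ) : ℝ := (r₂ + m * vstar r₀ r₂ K d a p c m) / c

/-- Linearization coefficient a₁₂. -/
noncomputable def a12 (r₀ r₂ K d a p c m : ℝ) : ℝ :=
  -K*r₀*ustar r₀ r₂ K d a p c m / (1 + K*vstar r₀ r₂ K d a p c m)^2 - p*ustar r₀ r₂ K d a p c m

/-- Linearization coefficient a₂₁. -/
noncomputable def a21 (r₀ r₂ K d a p c m : ℝ) : ℝ := c * vstar r₀ r₂ K d a p c m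

/-- Linearization coefficient a₂₂. -/
noncomputable def a22 (r₀ r₂ K d a p c m : ℝ) : ℝ := -m * vstar r₀ r₂ K d a p c m

/-- Linearization coefficient b₁₁. -/
noncomputable def b11 (r₀ r₂ K d a p c m : ℝ) : ℝ := -a * ustar r₀ r₂ K d a p c m

/-- A_k = (d₁ + d₂)·k²/l² − a₂₂. -/
noncomputable def Ak (r₀ r₂ K d a p c m d₁ d₂ l : ℝ) (k : ℕ) : ℝ :=
  (d₁ + d₂)*(k:ℝ)^2/l^2 - a22 r₀ r₂ K d a p c m

/-- B_k = d₁·d₂·k⁴/l⁴ − a₂₂·d₁·k²/l² − a₁₂·a₂₁. -/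
noncomputable def Bk (r₀ r₂ K d a p c m d₁ d₂ l : ℝ) (k : ℕ) : ℝ :=
  d₁*d₂*(k:ℝ)^4/l^4 - a22 r₀ r₂ K d a p c m * d₁*(k:ℝ)^2/l^2 - a12 r₀ r₂ K d a p c m * a21 r₀ r₂ K d a p c m

/-- C_k = −b₁₁·d₂·k²/l² + a₂₂·b₁₁. -/
noncomputable def Ck (r₀ r₂ K d a p c m d₁ d₂ l : ℝ) (k : ℕ) : ℝ :=
  -(b11 r₀ r₂ K d a p c m)*d₂*(k:ℝ)^2/l^2 + a22 r₀ r₂ K d a p c m * b11 r₀ r₂ K d a p c m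

/-- Ĉ_k(ω) = (d₁·b₁₁·ω²·k²/l² − B_k·C_k)/(b₁₁²·ω² + C_k²). -/
noncomputable def Chat (r₀ r₂ K d a p c m d₁ d₂ l : ℝ) (k : ℕ) (ω : ℝ) : ℝ :=
  (d₁ * b11 r₀ r₂ K d a p c m * ω^2 * (k:ℝ)^2/l^2 - Bk r₀ r₂ K d a p c m d₁ d₂ l k * Ck r₀ r₂ K d a p c m d₁ d₂ l k) /
    ((b11 r₀ r₂ K d a p c m)^2*ω^2 + (Ck r₀ r₂ K d a p c m d₁ d₂ l k)^2)

/-- S_k(ω) = (A_k·C_k·ω + B_k·b₁₁·ω − b₁₁·ω³)/(b₁₁²·ω² + C_k²). -/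
noncomputable def Sk (r₀ r₂ K d a p c m d₁ d₂ l : ℝ) (k : ℕ) (ω : ℝ) : ℝ :=
  (Ak r₀ r₂ K d a p c m d₁ d₂ l k * Ck r₀ r₂ K d a p c m d₁ d₂ l k * ω + Bk r₀ r₂ K d a p c m d₁ d₂ l k * b11 r₀ r₂ K d a p c m * ω - b11 r₀ r₂ K d a p c m * ω^3) /
    ((b11 r₀ r₂ K d a p c m)^2*ω^2 + (Ck r₀ r₂ K d a p c m d₁ d₂ l k)^2)

theorem stmt8 (r₀ r₂ K d a p c m d₁ d₂ l : ℝ) (hr₀ : 0 < r₀) (hr₂ : 0 < r₂) (hK : 0 < K) (hd : 0 < d) (ha : 0 < a) (hp : 0 < p) (hc : 0 < c) (hm : 0 < m)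
    (hd₁ : 0 < d₁) (hd₂ : 0 < d₂) (hl : 0 < l)
    (hH0 : a*r₂ + c*d - c*r₀ < 0) :
    ∀ (k : ℕ) (ω : ℝ), Chat r₀ r₂ K d a p c m d₁ d₂ l k ω < 0 := by
  intro k ω
  have hS : 0 < a*m + c*p := by positivity
  have hM : 0 < a*m + c*p + K*(a*r₂ + c*d) := by positivity
  have hΔ : (a*m + c*p + K*(a*r₂ + c*d))^2 < Delta r₀ r₂ K d a p c m := by
    unfold Delta
    nlinarith [mul_pos hK hS]
  have hsq : a*m + c*p + K*(a*r₂ + c*d) < Real.sqrt (Delta r₀ r₂ K d a p c m) :=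
    (Real.lt_sqrt hM.le).mpr hΔ
  have hv : 0 < vstar r₀ r₂ K d a p c m := by
    unfold vstar
    exact div_pos (by linarith) (by positivity)
  have hu : 0 < ustar r₀ r₂ K d a p c m := by
    unfold ustar
    exact div_pos (by nlinarith) hc
  have hb : b11 r₀ r₂ K d a p c m < 0 := by
    unfold b11
    have := mul_pos ha hu
    linarith
  have ha22 : a22 r₀ r₂ K d a p c m < 0 := by
    unfold a22
    have := mul_pos hm hv
    linarith
  have ha12 : a12 r₀ r₂ K d a p c m < 0 := by
    unfold a12
    have h1 : (0:ℝ) < (1 + K*vstar r₀ r₂ K d a p c m)^2 := by positivity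
    have h2 : 0 < K*r₀*ustar r₀ r₂ K d a p c m / (1 + K*vstar r₀ r₂ K d a p c m)^2 :=
      div_pos (by positivity) h1
    have h3 : -K*r₀*ustar r₀ r₂ K d a p c m / (1 + K*vstar r₀ r₂ K d a p c m)^2
        = -(K*r₀*ustar r₀ r₂ K d a p c m / (1 + K*vstar r₀ r₂ K d a p c m)^2) := by ring
    rw [h3]
    have := mul_pos hp hu
    linarith
  have ha21 : 0 < a21 r₀ r₂ K d a p c m := by
    unfold a21; positivity
  have hk2 : (0:ℝ) ≤ (k:ℝ)^2/l^2 := by positivity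
  have hB : 0 < Bk r₀ r₂ K d a p c m d₁ d₂ l k := by
    unfold Bk
    have h1 : 0 ≤ d₁*d₂*(k:ℝ)^4/l^4 := by positivity
    have h2 : 0 ≤ (-(a22 r₀ r₂ K d a p c m) * d₁) * ((k:ℝ)^2/l^2) :=
      mul_nonneg (mul_nonneg (by linarith) hd₁.le) hk2
    have h3 : a12 r₀ r₂ K d a p c m * a21 r₀ r₂ K d a p c m < 0 :=
      mul_neg_of_neg_of_pos ha12 ha21
    have e : d₁*d₂*(k:ℝ)^4/l^4 - a22 r₀ r₂ K d a p c m * d₁*(k:ℝ)^2/l^2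
          - a12 r₀ r₂ K d a p c m * a21 r₀ r₂ K d a p c m
        = d₁*d₂*(k:ℝ)^4/l^4 + (-(a22 r₀ r₂ K d a p c m) * d₁) * ((k:ℝ)^2/l^2)
          + (-(a12 r₀ r₂ K d a p c m * a21 r₀ r₂ K d a p c m)) := by ring
    rw [e]; linarith
  have hC : 0 < Ck r₀ r₂ K d a p c m d₁ d₂ l k := by
    unfold Ck
    have h1 : 0 ≤ (-(b11 r₀ r₂ K d a p c m) * d₂) * ((k:ℝ)^2/l^2) :=
      mul_nonneg (mul_nonneg (by linarith) hd₂.le) hk2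
    have h2 : 0 < a22 r₀ r₂ K d a p c m * b11 r₀ r₂ K d a p c m :=
      mul_pos_of_neg_of_neg ha22 hb
    have e : -(b11 r₀ r₂ K d a p c m)*d₂*(k:ℝ)^2/l^2 + a22 r₀ r₂ K d a p c m * b11 r₀ r₂ K d a p c m
        = (-(b11 r₀ r₂ K d a p c m) * d₂) * ((k:ℝ)^2/l^2) + a22 r₀ r₂ K d a p c m * b11 r₀ r₂ K d a p c m := by ring
    rw [e]; linarith
  have hden : 0 < (b11 r₀ r₂ K d a p c m)^2*ω^2 + (Ck r₀ r₂ K d a p c m d₁ d₂ l k)^2 := by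
    exact add_pos_of_nonneg_of_pos (mul_nonneg (sq_nonneg _) (sq_nonneg _)) (pow_pos hC 2)
  have hnum : d₁ * b11 r₀ r₂ K d a p c m * ω^2 * (k:ℝ)^2/l^2
      - Bk r₀ r₂ K d a p c m d₁ d₂ l k * Ck r₀ r₂ K d a p c m d₁ d₂ l k < 0 := by
    have hdb : d₁ * b11 r₀ r₂ K d a p c m ≤ 0 :=
      mul_nonpos_iff.mpr (Or.inl ⟨hd₁.le, hb.le⟩)
    have h1 : (d₁ * b11 r₀ r₂ K d a p c m) * (ω^2 * ((k:ℝ)^2/l^2)) ≤ 0 :=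
      mul_nonpos_iff.mpr (Or.inr ⟨hdb, by positivity⟩)
    have h2 : 0 < Bk r₀ r₂ K d a p c m d₁ d₂ l k * Ck r₀ r₂ K d a p c m d₁ d₂ l k :=
      mul_pos hB hC
    have e : d₁ * b11 r₀ r₂ K d a p c m * ω^2 * (k:ℝ)^2/l^2
          - Bk r₀ r₂ K d a p c m d₁ d₂ l k * Ck r₀ r₂ K d a p c m d₁ d₂ l k
        = (d₁ * b11 r₀ r₂ K d a p c m) * (ω^2 * ((k:ℝ)^2/l^2))
          + (-(Bk r₀ r₂ K d a p c m d₁ d₂ l k * Ck r₀ r₂ K d a p c m d₁ d₂ l k)) := by ring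
    rw [e]; linarith
  unfold Chat
  exact div_neg_of_neg_of_pos hnum hden
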